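/- Let 2 ≤ p < ∞. There exists a constant C = C(p) > 0 such that for every continuously differentiable bounded function F : (0,∞) → ℝ with ∫₀^∞ |F'(r) + (2/r) F(r)|^p r² dr < ∞, one has ∫₀^∞ |F(r)/r|^p r² dr < ∞ and (∫₀^∞ |F(r)/r|^p r² dr)^{1/p} ≤ C (∫₀^∞ |F'(r) + (2/r) F(r)|^p r² dr)^{1/p}. -/

import Mathlib

open MeasureTheory Set Filter Topology

lemma hardy_contOn {F : ℝ → ℝ} (hF : ContDiffOn ℝ 1 F (Set.Ioi 0)) :
    ContinuousOn (fun s => deriv F s + (2 / s) * F s) (Set.Ioi 0) := by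
  have hd : ContinuousOn (deriv F) (Set.Ioi 0) := by
    have h1 := hF.continuousOn_derivWithin (isOpen_Ioi.uniqueDiffOn) le_rfl
    exact h1.congr fun x hx => (derivWithin_of_isOpen isOpen_Ioi hx).symm
  exact hd.add (((continuousOn_const.div continuousOn_id
    (fun x hx => ne_of_gt hx)).mul hF.continuousOn))

lemma hardy_int {p : ℝ} (hp : 2 ≤ p) {F : ℝ → ℝ}
    (hF : ContDiffOn ℝ 1 F (Set.Ioi 0))
    (hi : IntegrableOn (fun r => |deriv F r + (2 / r) * F r| ^ p * r ^ 2) (Set.Ioi 0))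
    {r : ℝ} (hr : 0 < r) :
    IntegrableOn (fun s => s ^ 2 * (deriv F s + (2 / s) * F s)) (Set.Ioc 0 r) := by
  set q : ℝ := p / (p - 1) with hq
  have hpq : p.HolderConjugate q := (Real.holderConjugate_iff_eq_conjExponent (by linarith)).2 hq
  set g := fun s => deriv F s + (2 / s) * F s with hgdef
  have hdom : IntegrableOn
      (fun s => |g s| ^ p * s ^ 2 / p + s ^ 2 / q) (Set.Ioc 0 r) := by
    refine Integrable.add (Integrable.div_const ?_ _) (Integrable.div_const ?_ _)
    · exact hi.mono_set Set.Ioc_subset_Ioi_self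
    · exact (continuous_pow 2).integrableOn_Ioc
  refine hdom.mono' ?_ ?_
  · exact ContinuousOn.aestronglyMeasurable
      ((continuous_pow 2).continuousOn.mul ((hardy_contOn hF).mono Set.Ioc_subset_Ioi_self))
      measurableSet_Ioc
  · refine (ae_restrict_mem measurableSet_Ioc).mono fun s hs => ?_
    have hs0 : (0:ℝ) < s := hs.1
    have hs2 : s ^ (2:ℝ) = s ^ (2:ℕ) := by
      rw [← Real.rpow_natCast s 2]; norm_num
    have h1 := Real.young_inequality_of_nonneg
      (mul_nonneg (abs_nonneg (g s)) (Real.rpow_nonneg hs0.le (2/p)))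
      (Real.rpow_nonneg hs0.le (2/q)) hpq
    have e1 : |g s| * s ^ (2/p) * (s ^ (2/q)) = |g s| * s ^ (2:ℕ) := by
      rw [mul_assoc, ← Real.rpow_add hs0, ← hs2]
      congr 2
      have hmul := hpq.mul_eq_add
      have hp0 := hpq.ne_zero
      have hq0 := hpq.symm.ne_zero
      field_simp
      linarith
    have e2 : (|g s| * s ^ (2/p)) ^ p = |g s| ^ p * s ^ (2:ℕ) := by
      rw [Real.mul_rpow (abs_nonneg _) (Real.rpow_nonneg hs0.le _),
        ← Real.rpow_mul hs0.le, div_mul_cancel₀ _ hpq.ne_zero, hs2]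
    have e3 : (s ^ (2/q)) ^ q = s ^ (2:ℕ) := by
      rw [← Real.rpow_mul hs0.le, div_mul_cancel₀ _ hpq.symm.ne_zero, hs2]
    have hnorm : ‖s ^ 2 * g s‖ = |g s| * s ^ (2/p) * (s ^ (2/q)) := by
      rw [e1, Real.norm_eq_abs, abs_mul, abs_pow, abs_of_pos hs0, mul_comm]
    rw [hnorm]
    calc |g s| * s ^ (2/p) * (s ^ (2/q))
        ≤ (|g s| * s ^ (2/p)) ^ p / p + (s ^ (2/q)) ^ q / q := h1
      _ = |g s| ^ p * s ^ 2 / p + s ^ 2 / q := by rw [e2, e3]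

lemma hardy_ftc {p : ℝ} (hp : 2 ≤ p) {F : ℝ → ℝ}
    (hF : ContDiffOn ℝ 1 F (Set.Ioi 0)) {B : ℝ} (hB : ∀ r > (0:ℝ), |F r| ≤ B)
    (hi : IntegrableOn (fun r => |deriv F r + (2 / r) * F r| ^ p * r ^ 2) (Set.Ioi 0))
    {r : ℝ} (hr : 0 < r) :
    r ^ 2 * F r = ∫ s in Set.Ioc 0 r, s ^ 2 * (deriv F s + (2 / s) * F s) := by
  set g := fun s => deriv F s + (2 / s) * F s with hgdef
  have hgc : ContinuousOn g (Set.Ioi 0) := by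
    have hd : ContinuousOn (deriv F) (Set.Ioi 0) := by
      have h1 := hF.continuousOn_derivWithin (isOpen_Ioi.uniqueDiffOn) le_rfl
      exact h1.congr fun x hx => (derivWithin_of_isOpen isOpen_Ioi hx).symm
    exact hd.add (((continuousOn_const.div continuousOn_id
      (fun x hx => ne_of_gt hx)).mul hF.continuousOn))
  have hasD : ∀ s ∈ Set.Ioi (0:ℝ), HasDerivAt (fun t => t ^ 2 * F t) (s ^ 2 * g s) s := by
    intro s hs
    have hs0 : (0:ℝ) < s := hs
    have hFd : DifferentiableAt ℝ F s :=
      (hF.differentiableOn one_ne_zero).differentiableAt (isOpen_Ioi.mem_nhds hs)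
    have h2 := (hasDerivAt_pow 2 s).fun_mul hFd.hasDerivAt
    refine h2.congr_deriv ?_
    rw [hgdef]
    field_simp
    ring
  set a : ℕ → ℝ := fun n => r / (n + 2) with hadef
  have ha_pos : ∀ n, 0 < a n := fun n => div_pos hr (by positivity)
  have ha_lt : ∀ n, a n < r := by
    intro n
    rw [hadef, div_lt_iff₀ (by positivity)]
    nlinarith [hr]
  have ha_tend : Tendsto a atTop (𝓝 0) := by
    have h0 : Tendsto (fun n : ℕ => r / (n:ℝ)) atTop (𝓝 0) :=
      tendsto_const_div_atTop_nhds_zero_nat r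
    have := h0.comp (tendsto_add_atTop_nat 2)
    refine this.congr fun n => ?_
    show r / ((n + 2 : ℕ):ℝ) = a n
    rw [hadef]
    push_cast
    ring_nf
  have heqn : ∀ n, ∫ s in Set.Ioc (a n) r, s ^ 2 * g s = r ^ 2 * F r - (a n) ^ 2 * F (a n) := by
    intro n
    rw [← intervalIntegral.integral_of_le (ha_lt n).le]
    refine intervalIntegral.integral_eq_sub_of_hasDerivAt (f := fun t => t ^ 2 * F t) (fun x hx => ?_) ?_
    · rw [Set.uIcc_of_le (ha_lt n).le] at hx
      exact hasD x (lt_of_lt_of_le (ha_pos n) hx.1)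
    · apply ContinuousOn.intervalIntegrable
      rw [Set.uIcc_of_le (ha_lt n).le]
      refine ((continuous_pow 2).continuousOn.mul (hgc.mono ?_))
      exact fun x hx => lt_of_lt_of_le (ha_pos n) hx.1
  have hUnion : (⋃ n, Set.Ioc (a n) r) = Set.Ioc 0 r := by
    ext x
    simp only [Set.mem_iUnion, Set.mem_Ioc]
    constructor
    · rintro ⟨n, hn1, hn2⟩
      exact ⟨lt_trans (ha_pos n) hn1, hn2⟩
    · rintro ⟨hx0, hxr⟩
      obtain ⟨N, hN⟩ := exists_nat_gt (r / x)
      refine ⟨N, ?_, hxr⟩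
      rw [hadef]
      rw [div_lt_iff₀ (by positivity)]
      have : r / x < (N:ℝ) + 2 := lt_of_lt_of_le hN (by linarith)
      calc r = (r / x) * x := by field_simp
        _ < ((N:ℝ) + 2) * x := by exact mul_lt_mul_of_pos_right this hx0
        _ = x * ((N:ℝ) + 2) := by ring
  have hmono : Monotone (fun n => Set.Ioc (a n) r) := by
    intro n m hnm
    apply Set.Ioc_subset_Ioc_left
    rw [hadef]
    apply div_le_div_of_nonneg_left hr.le (by positivity)
    push_cast
    linarith [(Nat.cast_le (α := ℝ)).2 hnm]
  have htend1 : Tendsto (fun n => ∫ s in Set.Ioc (a n) r, s ^ 2 * g s) atTop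
      (𝓝 (∫ s in Set.Ioc 0 r, s ^ 2 * g s)) := by
    have := tendsto_setIntegral_of_monotone (fun n => measurableSet_Ioc) hmono
      (by rw [hUnion]; exact hardy_int hp hF hi hr)
    rwa [hUnion] at this
  have htend2 : Tendsto (fun n => ∫ s in Set.Ioc (a n) r, s ^ 2 * g s) atTop
      (𝓝 (r ^ 2 * F r)) := by
    have hz : Tendsto (fun n => (a n) ^ 2 * F (a n)) atTop (𝓝 0) := by
      have hbnd : Tendsto (fun n => (a n) ^ 2 * B) atTop (𝓝 0) := by
        have := ((ha_tend.pow 2).mul_const B)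
        simpa using this
      refine squeeze_zero_norm (fun n => ?_) hbnd
      rw [norm_mul, norm_pow, Real.norm_eq_abs, Real.norm_eq_abs,
        abs_of_pos (ha_pos n)]
      exact mul_le_mul_of_nonneg_left (hB _ (ha_pos n)) (by positivity)
    have := (tendsto_const_nhds (x := r ^ 2 * F r) (f := atTop (α := ℕ))).sub hz
    rw [sub_zero] at this
    exact Tendsto.congr (fun n => (heqn n).symm) this
  exact (tendsto_nhds_unique htend2 htend1)

lemma hardy_pointwise {p : ℝ} (hp : 2 ≤ p) {F : ℝ → ℝ}
    (hF : ContDiffOn ℝ 1 F (Set.Ioi 0)) {B : ℝ} (hB : ∀ r > (0:ℝ), |F r| ≤ B)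
    (hi : IntegrableOn (fun r => |deriv F r + (2 / r) * F r| ^ p * r ^ 2) (Set.Ioi 0))
    {r : ℝ} (hr : 0 < r) :
    ENNReal.ofReal (|F r / r| ^ p * r ^ 2) ≤
      ENNReal.ofReal (r ^ (1 - 2*p)) *
        ∫⁻ s in Set.Ioc 0 r,
          ENNReal.ofReal (s ^ (2*p) * |deriv F s + (2 / s) * F s| ^ p) := by
  have hp0 : (0:ℝ) < p := by linarith
  set q : ℝ := p / (p - 1) with hq
  have hpq : p.HolderConjugate q := (Real.holderConjugate_iff_eq_conjExponent (by linarith)).2 hq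
  set g := fun s => deriv F s + (2 / s) * F s with hgdef
  have hint : IntegrableOn (fun s => s ^ 2 * g s) (Set.Ioc 0 r) := hardy_int hp hF hi hr
  set M := ∫ s in Set.Ioc 0 r, |s ^ 2 * g s| with hMdef
  have hM0 : 0 ≤ M := integral_nonneg fun s => abs_nonneg _
  -- real part
  have hFr : |F r| * r ^ 2 ≤ M := by
    have h1 : r ^ 2 * F r = ∫ s in Set.Ioc 0 r, s ^ 2 * g s := hardy_ftc hp hF hB hi hr
    calc |F r| * r ^ 2 = |r ^ 2 * F r| := by
          rw [abs_mul, abs_of_pos (pow_pos hr 2), mul_comm]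
      _ = |∫ s in Set.Ioc 0 r, s ^ 2 * g s| := by rw [h1]
      _ ≤ M := by
          rw [hMdef]
          simpa only [Real.norm_eq_abs] using
            norm_integral_le_integral_norm (μ := volume.restrict (Set.Ioc 0 r))
              (fun s => s ^ 2 * g s)
  have h3 : r ^ (3:ℝ) = r ^ (3:ℕ) := by rw [← Real.rpow_natCast r 3]; norm_num
  have h2 : r ^ (2:ℝ) = r ^ (2:ℕ) := by rw [← Real.rpow_natCast r 2]; norm_num
  have hA : |F r / r| ≤ M * r ^ (-3:ℝ) := by
    rw [abs_div, abs_of_pos hr, Real.rpow_neg hr.le, h3, ← div_eq_mul_inv,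
      div_le_div_iff₀ hr (pow_pos hr 3)]
    nlinarith [mul_le_mul_of_nonneg_right hFr hr.le]
  have hmain : |F r / r| ^ p * r ^ 2 ≤ r ^ (2 - 3*p) * M ^ p := by
    have hAp := Real.rpow_le_rpow (abs_nonneg _) hA hp0.le
    have e : (M * r ^ (-3:ℝ)) ^ p = M ^ p * r ^ (-3*p) := by
      rw [Real.mul_rpow hM0 (Real.rpow_nonneg hr.le _), ← Real.rpow_mul hr.le]
    calc |F r / r| ^ p * r ^ 2
        ≤ (M * r ^ (-3:ℝ)) ^ p * r ^ 2 := by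
          exact mul_le_mul_of_nonneg_right hAp (by positivity)
      _ = r ^ (2 - 3*p) * M ^ p := by
          rw [e, ← h2, mul_assoc, ← Real.rpow_add hr,
            show -3*p + 2 = 2 - 3*p by ring, mul_comm]
  -- ENNReal part
  have hintabs : IntegrableOn (fun s => |s ^ 2 * g s|) (Set.Ioc 0 r) := hint.abs
  have hMeq : ENNReal.ofReal M
      = ∫⁻ s in Set.Ioc 0 r, ENNReal.ofReal |s ^ 2 * g s| :=
    ofReal_integral_eq_lintegral_ofReal hintabs
      (Filter.Eventually.of_forall fun s => abs_nonneg _)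
  have hfmeas : AEMeasurable (fun s => ENNReal.ofReal |s ^ 2 * g s|)
      (volume.restrict (Set.Ioc 0 r)) :=
    (ENNReal.measurable_ofReal.comp_aemeasurable hintabs.aemeasurable)
  have hholder := ENNReal.lintegral_mul_le_Lp_mul_Lq (volume.restrict (Set.Ioc 0 r)) hpq
    hfmeas (aemeasurable_const (b := (1:ENNReal)))
  simp only [Pi.mul_apply, mul_one, ENNReal.one_rpow, lintegral_const,
    Measure.restrict_apply, MeasurableSet.univ, Set.univ_inter, Real.volume_Ioc,
    sub_zero, one_mul] at hholder
  -- identify the p-power integral with Ψ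
  have hcongr : ∫⁻ s in Set.Ioc 0 r, (ENNReal.ofReal |s ^ 2 * g s|) ^ p
      = ∫⁻ s in Set.Ioc 0 r, ENNReal.ofReal (s ^ (2*p) * |g s| ^ p) := by
    refine setLIntegral_congr_fun measurableSet_Ioc
      (fun s hs => ?_)
    rw [ENNReal.ofReal_rpow_of_nonneg (abs_nonneg _) hp0.le]
    congr 1
    rw [abs_mul, abs_of_pos (pow_pos hs.1 2),
      Real.mul_rpow (by positivity) (abs_nonneg _)]
    congr 1
    rw [← Real.rpow_natCast s 2, ← Real.rpow_mul hs.1.le]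
    norm_num
  rw [hcongr] at hholder
  set J := ∫⁻ s in Set.Ioc 0 r, ENNReal.ofReal (s ^ (2*p) * |g s| ^ p) with hJ
  -- conclude
  have hq0 : 0 ≤ p - 1 := by linarith
  calc ENNReal.ofReal (|F r / r| ^ p * r ^ 2)
      ≤ ENNReal.ofReal (r ^ (2 - 3*p) * M ^ p) := ENNReal.ofReal_le_ofReal hmain
    _ = ENNReal.ofReal (r ^ (2 - 3*p)) * (ENNReal.ofReal M) ^ p := by
        rw [ENNReal.ofReal_mul (Real.rpow_nonneg hr.le _),
          ENNReal.ofReal_rpow_of_nonneg hM0 hp0.le]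
    _ ≤ ENNReal.ofReal (r ^ (2 - 3*p)) * (J ^ (1/p) * (ENNReal.ofReal r) ^ (1/q)) ^ p := by
        gcongr
        rw [hMeq]
        exact hholder
    _ = ENNReal.ofReal (r ^ (2 - 3*p)) * (J * (ENNReal.ofReal r) ^ (p - 1)) := by
        rw [ENNReal.mul_rpow_of_nonneg _ _ hp0.le, ← ENNReal.rpow_mul, ← ENNReal.rpow_mul,
          one_div_mul_cancel hp0.ne', ENNReal.rpow_one]
        rw [div_mul_eq_mul_div, one_mul, hpq.div_conj_eq_sub_one]
    _ = ENNReal.ofReal (r ^ (1 - 2*p)) * J := by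
        rw [ENNReal.ofReal_rpow_of_nonneg hr.le hq0, mul_comm J, ← mul_assoc,
          ← ENNReal.ofReal_mul (Real.rpow_nonneg hr.le _), ← Real.rpow_add hr,
          show (2 - 3*p) + (p - 1) = 1 - 2*p by ring]

lemma hardy_tonelli {p : ℝ} (hp : 2 ≤ p) {F : ℝ → ℝ}
    (hF : ContDiffOn ℝ 1 F (Set.Ioi 0)) :
    (∫⁻ r in Set.Ioi (0:ℝ), ENNReal.ofReal (r ^ (1 - 2*p)) *
        ∫⁻ s in Set.Ioc 0 r, ENNReal.ofReal (s ^ (2*p) * |deriv F s + (2 / s) * F s| ^ p))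
      ≤ ENNReal.ofReal (1/(2*p-2)) *
        ∫⁻ s in Set.Ioi (0:ℝ), ENNReal.ofReal (|deriv F s + (2 / s) * F s| ^ p * s ^ 2) := by
  have hp0 : (0:ℝ) < p := by linarith
  set g := fun s => deriv F s + (2 / s) * F s with hgdef
  have hgc : ContinuousOn g (Set.Ioi 0) := by
    have hd : ContinuousOn (deriv F) (Set.Ioi 0) := by
      have h1 := hF.continuousOn_derivWithin (isOpen_Ioi.uniqueDiffOn) le_rfl
      exact h1.congr fun x hx => (derivWithin_of_isOpen isOpen_Ioi hx).symm
    exact hd.add (((continuousOn_const.div continuousOn_id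
      (fun x hx => ne_of_gt hx)).mul hF.continuousOn))
  set Φ : ℝ → ENNReal := fun s => ENNReal.ofReal (s ^ (2*p) * |g s| ^ p) with hΦ
  set W : ℝ → ENNReal := fun r => ENNReal.ofReal (r ^ (1 - 2*p)) with hW
  have hΦm : AEMeasurable Φ (volume.restrict (Set.Ioi 0)) := by
    have hc : ContinuousOn (fun s : ℝ => s ^ (2*p) * |g s| ^ p) (Set.Ioi 0) := by
      refine ContinuousOn.mul ?_ (hgc.abs.rpow_const fun x hx => Or.inr hp0.le)
      exact continuousOn_id.rpow_const fun x hx => Or.inr (by positivity)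
    exact ENNReal.measurable_ofReal.comp_aemeasurable
      (hc.aemeasurable measurableSet_Ioi)
  have hWm : AEMeasurable W (volume.restrict (Set.Ioi 0)) := by
    have hc : ContinuousOn (fun r : ℝ => r ^ (1 - 2*p)) (Set.Ioi 0) :=
      continuousOn_id.rpow_const fun x hx => Or.inl (ne_of_gt hx)
    exact ENNReal.measurable_ofReal.comp_aemeasurable
      (hc.aemeasurable measurableSet_Ioi)
  -- rewrite inner integral using indicators
  have step1 : ∀ r ∈ Set.Ioi (0:ℝ),
      (W r * ∫⁻ s in Set.Ioc 0 r, Φ s)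
        = ∫⁻ s in Set.Ioi (0:ℝ), (if s ≤ r then W r * Φ s else 0) := by
    intro r _
    have : ∀ s, (if s ≤ r then W r * Φ s else 0)
        = (Set.Iic r).indicator (fun s => W r * Φ s) s := by
      intro s
      by_cases h : s ≤ r <;> simp [Set.indicator, h]
    rw [lintegral_congr this, lintegral_indicator measurableSet_Iic,
      Measure.restrict_restrict measurableSet_Iic]
    rw [show Set.Iic r ∩ Set.Ioi 0 = Set.Ioc 0 r by
      rw [Set.inter_comm, Set.Ioi_inter_Iic]]
    rw [lintegral_const_mul' _ _ ENNReal.ofReal_ne_top]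
  have swap : (∫⁻ r in Set.Ioi (0:ℝ), ∫⁻ s in Set.Ioi (0:ℝ),
        (if s ≤ r then W r * Φ s else 0))
      = ∫⁻ s in Set.Ioi (0:ℝ), ∫⁻ r in Set.Ioi (0:ℝ),
        (if s ≤ r then W r * Φ s else 0) := by
    apply lintegral_lintegral_swap
    have hmeas : AEMeasurable (fun z : ℝ × ℝ => W z.1 * Φ z.2)
        ((volume.restrict (Set.Ioi 0)).prod (volume.restrict (Set.Ioi 0))) := by
      refine AEMeasurable.fun_mul ?_ ?_
      · exact hWm.comp_quasiMeasurePreserving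
          (Measure.quasiMeasurePreserving_fst)
      · exact hΦm.comp_quasiMeasurePreserving
          (Measure.quasiMeasurePreserving_snd)
    have := hmeas.indicator (s := {z : ℝ × ℝ | z.2 ≤ z.1})
      (measurableSet_le measurable_snd measurable_fst)
    refine this.congr (Filter.Eventually.of_forall fun z => ?_)
    by_cases h : z.2 ≤ z.1 <;> simp [Function.uncurry, Set.indicator, h]
  -- inner integral in r
  have step2 : ∀ s ∈ Set.Ioi (0:ℝ),
      (∫⁻ r in Set.Ioi (0:ℝ), (if s ≤ r then W r * Φ s else 0))
        = ENNReal.ofReal (1/(2*p-2)) * ENNReal.ofReal (|g s| ^ p * s ^ 2) := by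
    intro s hs
    have hs0 : (0:ℝ) < s := hs
    have hWint : IntegrableOn (fun r : ℝ => r ^ (1 - 2*p)) (Set.Ioi s) :=
      integrableOn_Ioi_rpow_of_lt (by linarith) hs0
    have hK : (∫⁻ r in Set.Ioi s, W r) = ENNReal.ofReal (s ^ (2 - 2*p) / (2*p - 2)) := by
      rw [hW]
      rw [← ofReal_integral_eq_lintegral_ofReal hWint ?_]
      · rw [integral_Ioi_rpow_of_lt (by linarith) hs0]
        congr 1
        rw [show (1 - 2*p) + 1 = 2 - 2*p by ring]
        have hne1 : (2 - 2*p : ℝ) ≠ 0 := ne_of_lt (by linarith)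
        have hne2 : (2*p - 2 : ℝ) ≠ 0 := ne_of_gt (by linarith)
        field_simp
        ring_nf; rw [← inv_neg]; ring
      · refine (ae_restrict_mem measurableSet_Ioi).mono fun r hr => ?_
        exact Real.rpow_nonneg (le_of_lt (lt_trans hs0 hr)) _
    have : ∀ r, (if s ≤ r then W r * Φ s else 0)
        = (Set.Ici s).indicator (fun r => W r * Φ s) r := by
      intro r
      by_cases h : s ≤ r <;> simp [Set.indicator, h]
    rw [lintegral_congr this, lintegral_indicator measurableSet_Ici,
      Measure.restrict_restrict measurableSet_Ici,
      show Set.Ici s ∩ Set.Ioi 0 = Set.Ici s from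
        Set.inter_eq_left.mpr (fun r hr => lt_of_lt_of_le hs0 hr),
      lintegral_mul_const' _ _ ENNReal.ofReal_ne_top]
    -- ∫⁻ r in Ici s = ∫⁻ r in Ioi s
    rw [show (volume.restrict (Set.Ici s)) = volume.restrict (Set.Ioi s) from
      (Measure.restrict_congr_set Ioi_ae_eq_Ici).symm]
    rw [hK]
    rw [← ENNReal.ofReal_mul (div_nonneg (Real.rpow_nonneg hs0.le _) (by linarith)),
      ← ENNReal.ofReal_mul (one_div_nonneg.mpr (by linarith))]
    congr 1
    have hs2 : s ^ (2 - 2*p) * s ^ (2*p) = s ^ 2 := by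
      rw [← Real.rpow_add hs0, show (2 - 2*p) + 2*p = 2 by ring,
        ← Real.rpow_natCast s 2]
      norm_num
    have e : s ^ (2 - 2*p) / (2*p-2) * (s ^ (2*p) * |g s| ^ p)
        = (s ^ (2 - 2*p) * s ^ (2*p)) * |g s| ^ p / (2*p-2) := by ring
    rw [e, hs2]
    ring
  calc (∫⁻ r in Set.Ioi (0:ℝ), W r * ∫⁻ s in Set.Ioc 0 r, Φ s)
      = ∫⁻ r in Set.Ioi (0:ℝ), ∫⁻ s in Set.Ioi (0:ℝ),
          (if s ≤ r then W r * Φ s else 0) := by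
        refine setLIntegral_congr_fun measurableSet_Ioi
          (fun r hr => step1 r hr)
    _ = ∫⁻ s in Set.Ioi (0:ℝ), ∫⁻ r in Set.Ioi (0:ℝ),
          (if s ≤ r then W r * Φ s else 0) := swap
    _ = ∫⁻ s in Set.Ioi (0:ℝ),
          ENNReal.ofReal (1/(2*p-2)) * ENNReal.ofReal (|g s| ^ p * s ^ 2) := by
        refine setLIntegral_congr_fun measurableSet_Ioi
          (fun s hs => step2 s hs)
    _ = ENNReal.ofReal (1/(2*p-2)) *
          ∫⁻ s in Set.Ioi (0:ℝ), ENNReal.ofReal (|g s| ^ p * s ^ 2) := by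
        rw [lintegral_const_mul' _ _ ENNReal.ofReal_ne_top]
    _ ≤ ENNReal.ofReal (1/(2*p-2)) *
          ∫⁻ s in Set.Ioi (0:ℝ), ENNReal.ofReal (|deriv F s + (2 / s) * F s| ^ p * s ^ 2) :=
        le_rfl

/-- Lemma 2.4 of the paper (general case `2 ≤ p < ∞`): a Hardy-type inequality for the radial
profile `F` of a bounded radial function on `ℝ³`, with the weighted measure `r² dr` on
`(0, ∞)` representing (up to `4π`) the `L^p(ℝ³)` norms of the corresponding radial functions. -/
theorem hardy_radial_Lp (p : ℝ) (hp : 2 ≤ p) :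
    ∃ C > (0:ℝ), ∀ F : ℝ → ℝ,
      ContDiffOn ℝ 1 F (Set.Ioi 0) →
      (∃ B : ℝ, ∀ r > (0:ℝ), |F r| ≤ B) →
      IntegrableOn (fun r => |deriv F r + (2 / r) * F r| ^ p * r ^ 2) (Set.Ioi 0) →
      IntegrableOn (fun r => |F r / r| ^ p * r ^ 2) (Set.Ioi 0) ∧
        (∫ r in Set.Ioi (0:ℝ), |F r / r| ^ p * r ^ 2) ^ (1 / p)
          ≤ C * (∫ r in Set.Ioi (0:ℝ), |deriv F r + (2 / r) * F r| ^ p * r ^ 2) ^ (1 / p) := by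
  have hp0 : (0:ℝ) < p := by linarith
  have hc0 : (0:ℝ) < 1/(2*p-2) := by
    apply one_div_pos.mpr; linarith
  refine ⟨(1/(2*p-2)) ^ (1/p), Real.rpow_pos_of_pos hc0 _, ?_⟩
  intro F hF hBex hi
  obtain ⟨B, hB⟩ := hBex
  set I := ∫ r in Set.Ioi (0:ℝ), |deriv F r + (2 / r) * F r| ^ p * r ^ 2 with hIdef
  have hInn : ∀ r : ℝ, 0 ≤ |deriv F r + (2 / r) * F r| ^ p * r ^ 2 :=
    fun r => mul_nonneg (Real.rpow_nonneg (abs_nonneg _) _) (sq_nonneg _)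
  have hI0 : 0 ≤ I := integral_nonneg hInn
  have hIlint : (∫⁻ r in Set.Ioi (0:ℝ),
      ENNReal.ofReal (|deriv F r + (2 / r) * F r| ^ p * r ^ 2)) = ENNReal.ofReal I :=
    (ofReal_integral_eq_lintegral_ofReal hi
      (Filter.Eventually.of_forall hInn)).symm
  have hfnn : ∀ r : ℝ, 0 ≤ |F r / r| ^ p * r ^ 2 :=
    fun r => mul_nonneg (Real.rpow_nonneg (abs_nonneg _) _) (sq_nonneg _)
  have hkey : (∫⁻ r in Set.Ioi (0:ℝ), ENNReal.ofReal (|F r / r| ^ p * r ^ 2))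
      ≤ ENNReal.ofReal (1/(2*p-2) * I) := by
    calc (∫⁻ r in Set.Ioi (0:ℝ), ENNReal.ofReal (|F r / r| ^ p * r ^ 2))
        ≤ ∫⁻ r in Set.Ioi (0:ℝ), ENNReal.ofReal (r ^ (1 - 2*p)) *
            ∫⁻ s in Set.Ioc 0 r,
              ENNReal.ofReal (s ^ (2*p) * |deriv F s + (2 / s) * F s| ^ p) := by
          refine lintegral_mono_ae ?_
          exact (ae_restrict_mem measurableSet_Ioi).mono fun r hr =>
            hardy_pointwise hp hF hB hi hr
      _ ≤ ENNReal.ofReal (1/(2*p-2)) *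
            ∫⁻ s in Set.Ioi (0:ℝ),
              ENNReal.ofReal (|deriv F s + (2 / s) * F s| ^ p * s ^ 2) :=
          hardy_tonelli hp hF
      _ = ENNReal.ofReal (1/(2*p-2) * I) := by
          rw [hIlint, ← ENNReal.ofReal_mul hc0.le]
  have hmeas : AEStronglyMeasurable (fun r => |F r / r| ^ p * r ^ 2)
      (volume.restrict (Set.Ioi (0:ℝ))) := by
    refine ContinuousOn.aestronglyMeasurable ?_ measurableSet_Ioi
    refine ContinuousOn.mul ?_ (continuous_pow 2).continuousOn
    exact (hF.continuousOn.div continuousOn_id fun x hx => ne_of_gt hx).abs.rpow_const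
      fun x hx => Or.inr hp0.le
  have hIntOn : IntegrableOn (fun r => |F r / r| ^ p * r ^ 2) (Set.Ioi 0) := by
    refine ⟨hmeas, ?_⟩
    rw [hasFiniteIntegral_iff_ofReal (Filter.Eventually.of_forall hfnn)]
    exact lt_of_le_of_lt hkey ENNReal.ofReal_lt_top
  refine ⟨hIntOn, ?_⟩
  have hreal : (∫ r in Set.Ioi (0:ℝ), |F r / r| ^ p * r ^ 2) ≤ 1/(2*p-2) * I := by
    rw [integral_eq_lintegral_of_nonneg_ae (Filter.Eventually.of_forall hfnn) hmeas]
    calc (∫⁻ r in Set.Ioi (0:ℝ), ENNReal.ofReal (|F r / r| ^ p * r ^ 2)).toReal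
        ≤ (ENNReal.ofReal (1/(2*p-2) * I)).toReal :=
          ENNReal.toReal_mono ENNReal.ofReal_ne_top hkey
      _ = 1/(2*p-2) * I := ENNReal.toReal_ofReal (by positivity)
  calc (∫ r in Set.Ioi (0:ℝ), |F r / r| ^ p * r ^ 2) ^ (1 / p)
      ≤ (1/(2*p-2) * I) ^ (1 / p) :=
        Real.rpow_le_rpow (integral_nonneg hfnn) hreal (by positivity)
    _ = (1/(2*p-2)) ^ (1/p) * I ^ (1/p) := Real.mul_rpow hc0.le hI0
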